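/- For any integers b, k ≥ 0 and any i with 1 ≤ i ≤ b−1 such that all quantum integers appearing are nonzero, the following sum formula holds: Σ_{a=0}^{k} ([a+i−1]! [b−i+a−1]!)/([a]! [a+b]!) = (1/([i][b−i])) · ([i+k]! [b+k−i]!)/([k]! [b+k]!). -/

import Mathlib

/-- The quantum integer `[m]`, with the convention `[m] = m·q^(m-1)` when `q = ±1`. -/
noncomputable def qint (q : ℂ) (m : ℤ) : ℂ :=
  if q ^ 2 = 1 then (m : ℂ) * q ^ (m - 1)
  else (q ^ m - q ^ (-m)) / (q - q⁻¹)

/-- The quantum factorial `[m]! = [1][2]⋯[m]`, with `[0]! = 1`. -/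
noncomputable def qfact (q : ℂ) : ℕ → ℂ
  | 0 => 1
  | n + 1 => qfact q n * qint q ((n : ℤ) + 1)

lemma qint_key (q : ℂ) (hq : q ≠ 0) (hq2 : q ^ 2 ≠ 1) (s t i : ℤ) :
    qint q s * qint q t + qint q i * qint q (t - s - i) =
      qint q (s + i) * qint q (t - i) := by
  have hi : q ^ i ≠ 0 := zpow_ne_zero _ hq
  have num : (q ^ s - q ^ (-s)) * (q ^ t - q ^ (-t)) +
      (q ^ i - q ^ (-i)) * (q ^ (t - s - i) - q ^ (-(t - s - i))) =
      (q ^ (s + i) - q ^ (-(s + i))) * (q ^ (t - i) - q ^ (-(t - i))) := by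
    simp only [neg_sub, neg_add, sub_neg_eq_add, zpow_add₀ hq, zpow_sub₀ hq, zpow_neg,
      div_eq_mul_inv, mul_inv, inv_inv]
    linear_combination (-((q ^ s - (q ^ s)⁻¹) * (q ^ t - (q ^ t)⁻¹))) * (mul_inv_cancel₀ hi)
  simp only [qint, if_neg hq2]
  rw [div_mul_div_comm, div_mul_div_comm, div_mul_div_comm, ← add_div, num]

lemma qfact_succ (q : ℂ) (n : ℕ) : qfact q (n + 1) = qfact q n * qint q ((n : ℤ) + 1) := rfl

lemma qfact_ne_zero (q : ℂ) (hgen : ∀ m : ℕ, 1 ≤ m → qint q (m : ℤ) ≠ 0) (n : ℕ) :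
    qfact q n ≠ 0 := by
  induction n with
  | zero => simp [qfact]
  | succ n ih =>
    rw [qfact_succ]
    refine mul_ne_zero ih ?_
    have := hgen (n + 1) (by omega)
    push_cast at this ⊢
    exact this

/-- the quantum summation formula
`Σ_(a=0)^k [a+i-1]!][b-i+a-1]!/([a]![a+b]!) = (1/([i][b-i]))·[i+k]![b+k-i]!/([k]![b+k]!)`
for `b, k ≥ 0` and `1 ≤ i ≤ b-1`, with all quantum integers nonzero
(`q` not a root of unity). -/
theorem quantum_sum_formula (q : ℂ) (hq : q ≠ 0) (hq2 : q ^ 2 ≠ 1)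
    (hgen : ∀ m : ℕ, 1 ≤ m → qint q (m : ℤ) ≠ 0)
    (b k i : ℕ) (hi1 : 1 ≤ i) (hi2 : i ≤ b - 1) :
    ∑ a ∈ Finset.range (k + 1),
        qfact q (a + i - 1) * qfact q (b - i + a - 1) / (qfact q a * qfact q (a + b)) =
      1 / (qint q (i : ℤ) * qint q ((b : ℤ) - (i : ℤ))) *
        (qfact q (i + k) * qfact q (b + k - i) / (qfact q k * qfact q (b + k))) := by
  have hib : i ≤ b := by omega
  have hbi1 : 1 ≤ b - i := by omega
  have hYcast : qint q ((b : ℤ) - (i : ℤ)) = qint q (((b - i : ℕ) : ℤ)) := by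
    congr 1; omega
  have hX : qint q (i : ℤ) ≠ 0 := hgen i hi1
  have hY : qint q ((b : ℤ) - (i : ℤ)) ≠ 0 := by
    rw [hYcast]; exact hgen _ hbi1
  have hF := qfact_ne_zero q hgen
  induction k with
  | zero =>
    rw [Finset.sum_range_one]
    have e1 : 0 + i - 1 = i - 1 := by omega
    have e2 : b - i + 0 - 1 = b - i - 1 := by omega
    have e3 : i + 0 = i := by omega
    have e4 : b + 0 - i = b - i := by omega
    have e5 : 0 + b = b := by omega
    have e6 : b + 0 = b := by omega
    rw [e1, e2, e3, e4, e5, e6]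
    have fi : qfact q i = qfact q (i - 1) * qint q (i : ℤ) := by
      obtain ⟨j, rfl⟩ : ∃ j, i = j + 1 := ⟨i - 1, by omega⟩
      rw [qfact_succ]
      norm_num
    have fbi : qfact q (b - i) = qfact q (b - i - 1) * qint q ((b : ℤ) - (i : ℤ)) := by
      obtain ⟨j, hj⟩ : ∃ j, b - i = j + 1 := ⟨b - i - 1, by omega⟩
      rw [hj, qfact_succ, hYcast, hj]
      norm_num
    rw [fi, fbi, div_mul_div_comm, one_mul,
      div_eq_div_iff (mul_ne_zero (hF 0) (hF b))
        (mul_ne_zero (mul_ne_zero hX hY) (mul_ne_zero (hF 0) (hF b)))]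
    ring
  | succ k ih =>
    rw [Finset.sum_range_succ, ih]
    have e1 : k + 1 + i - 1 = i + k := by omega
    have e2 : b - i + (k + 1) - 1 = b + k - i := by omega
    have e3 : i + (k + 1) = (i + k) + 1 := by omega
    have e4 : b + (k + 1) - i = (b + k - i) + 1 := by omega
    have e5 : k + 1 + b = (b + k) + 1 := by omega
    have e6 : b + (k + 1) = (b + k) + 1 := by omega
    rw [e1, e2, e3, e4, e5, e6, qfact_succ, qfact_succ, qfact_succ, qfact_succ]
    have key := qint_key q hq hq2 ((k : ℤ) + 1) ((b : ℤ) + k + 1) (i : ℤ)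
    rw [show ((b : ℤ) + k + 1 - (k + 1) - i) = (b : ℤ) - i by ring] at key
    have c1 : (((i + k : ℕ) : ℤ) + 1) = ((k : ℤ) + 1) + i := by push_cast; ring
    have c2 : (((b + k - i : ℕ) : ℤ) + 1) = ((b : ℤ) + k + 1) - i := by
      push_cast [Nat.cast_sub (by omega : i ≤ b + k)]; ring
    have c3 : (((b + k : ℕ) : ℤ) + 1) = ((b : ℤ) + k + 1) := by push_cast; ring
    have c4 : (((k : ℕ) : ℤ) + 1) = ((k : ℤ) + 1) := rfl
    rw [c1, c2, c3]
    have P : qint q ((k : ℤ) + 1) ≠ 0 := by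
      have := hgen (k + 1) (by omega); push_cast at this; exact this
    have Q : qint q ((b : ℤ) + k + 1) ≠ 0 := by
      have := hgen (b + k + 1) (by omega); push_cast at this; exact this
    have A := hF (i + k); have B := hF (b + k - i); have F := hF k; have G := hF (b + k)
    rw [div_mul_div_comm, one_mul, div_mul_div_comm, one_mul]
    rw [div_add_div _ _
      (mul_ne_zero (mul_ne_zero hX hY) (mul_ne_zero F G))
      (mul_ne_zero (mul_ne_zero F P) (mul_ne_zero G Q))]
    rw [div_eq_div_iff
      (mul_ne_zero (mul_ne_zero (mul_ne_zero hX hY) (mul_ne_zero F G))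
        (mul_ne_zero (mul_ne_zero F P) (mul_ne_zero G Q)))
      (mul_ne_zero (mul_ne_zero hX hY) (mul_ne_zero (mul_ne_zero F P) (mul_ne_zero G Q)))]
    linear_combination (qint q (i : ℤ) * qint q ((b : ℤ) - i) * qfact q k * qint q ((k : ℤ) + 1) *
      qfact q (b + k) * qint q ((b : ℤ) + k + 1) * qfact q (i + k) * qfact q (b + k - i) *
      qfact q k * qfact q (b + k)) * key
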